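/- Let q be a complex number with 0 < |q| < 1, and let b, d, e, f be complex numbers with b ≠ 0, d·e·f = 1, d ≠ 1, e ≠ 1, f ≠ 1, and b·q^{k+1}/d ≠ 1, b·q^{k+1}/e ≠ 1, b·q^{k+1}/f ≠ 1 for every integer k ≥ 0. Then ∑_{n=0}^{∞} (1 + b·q^n)·((bd;q)_n·(be;q)_n·(bf;q)_n / ((bq/d;q)_n·(bq/e;q)_n·(bq/f;q)_n))·q^n = ( (bd;q)_∞·(be;q)_∞·(bf;q)_∞ − (b/d;q)_∞·(b/e;q)_∞·(b/f;q)_∞ ) / ( b·(1−d)·(1−e)·(1−f)·(bq/d;q)_∞·(bq/e;q)_∞·(bq/f;q)_∞ ). -/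

import Mathlib

set_option maxHeartbeats 1600000

open Filter Topology Finset

/-- The finite q-Pochhammer symbol `(a;q)_n = ∏_{k=0}^{n-1} (1 - a q^k)`. -/
noncomputable def qPoch (a q : ℂ) (n : ℕ) : ℂ := ∏ k ∈ Finset.range n, (1 - a * q ^ k)

/-- The infinite q-Pochhammer symbol `(a;q)_∞ = ∏_{k=0}^{∞} (1 - a q^k)`. -/
noncomputable def qPochInf (a q : ℂ) : ℂ := ∏' k : ℕ, (1 - a * q ^ k)

lemma qPoch_succ (a q : ℂ) (n : ℕ) : qPoch a q (n+1) = qPoch a q n * (1 - a * q ^ n) :=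
  Finset.prod_range_succ _ _

lemma tail_facts {q : ℂ} (hq : ‖q‖ < 1) (a : ℂ) :
    ∃ m : ℕ, (∀ k : ℕ, (1 : ℂ) - a * q ^ (k + m) ≠ 0) ∧
      Summable (fun k : ℕ => Complex.log (1 - a * q ^ (k + m))) := by
  have h0 : Tendsto (fun k : ℕ => ‖a * q ^ k‖) atTop (𝓝 0) := by
    have h1 : Tendsto (fun k : ℕ => q ^ k) atTop (𝓝 0) :=
      tendsto_pow_atTop_nhds_zero_of_norm_lt_one hq
    have := (h1.const_mul a).norm
    simpa using this
  have hev : ∀ᶠ k : ℕ in atTop, ‖a * q ^ k‖ < 1/2 :=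
    h0.eventually_lt_const (by norm_num)
  obtain ⟨m, hm⟩ := eventually_atTop.mp hev
  refine ⟨m, ?_, ?_⟩
  · intro k h
    have h2 : (1 : ℂ) = a * q ^ (k + m) := sub_eq_zero.mp h
    have := hm (k + m) (Nat.le_add_left m k)
    rw [← h2] at this
    simp at this
    linarith
  · apply Summable.of_norm_bounded_eventually_nat
      (g := fun k : ℕ => (3/2 * ‖a * q ^ m‖) * ‖q‖ ^ k)
    · exact (summable_geometric_of_lt_one (norm_nonneg q) hq).mul_left _
    · filter_upwards with k
      have hk : ‖a * q ^ (k + m)‖ < 1/2 := hm (k + m) (Nat.le_add_left m k)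
      have hb : ‖(-(a * q ^ (k + m)))‖ ≤ 1/2 := by rw [norm_neg]; linarith
      have := Complex.norm_log_one_add_half_le_self hb
      have heq : (1 : ℂ) + -(a * q ^ (k + m)) = 1 - a * q ^ (k + m) := by ring
      rw [heq] at this
      calc ‖Complex.log (1 - a * q ^ (k + m))‖ ≤ 3/2 * ‖(-(a * q ^ (k + m)))‖ := this
        _ = 3/2 * ‖a * q ^ m‖ * ‖q‖ ^ k := by
            rw [norm_neg, pow_add, norm_mul, norm_mul, norm_pow, norm_pow, norm_mul, norm_pow]
            ring

lemma multipliable_of_summable_log (g : ℕ → ℂ) (hne : ∀ k, g k ≠ 0)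
    (hsum : Summable fun k => Complex.log (g k)) : Multipliable g := by
  exact Complex.multipliable_of_summable_log hsum

lemma tprod_ne_zero_of_summable_log (g : ℕ → ℂ) (hne : ∀ k, g k ≠ 0)
    (hsum : Summable fun k => Complex.log (g k)) : (∏' k, g k) ≠ 0 := by
  have h1 := Complex.cexp_tsum_eq_tprod hne hsum
  rw [← h1]
  exact Complex.exp_ne_zero _

lemma hasProd_aux {q : ℂ} (hq : ‖q‖ < 1) (a : ℂ) :
    ∃ m : ℕ, (∀ k : ℕ, (1 : ℂ) - a * q ^ (k + m) ≠ 0) ∧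
      Summable (fun k : ℕ => Complex.log (1 - a * q ^ (k + m))) ∧
      HasProd (fun k : ℕ => 1 - a * q ^ k)
        ((∏ i ∈ Finset.range m, (1 - a * q ^ i)) * ∏' k : ℕ, (1 - a * q ^ (k + m))) := by
  obtain ⟨m, hne, hsum⟩ := tail_facts hq a
  refine ⟨m, hne, hsum, ?_⟩
  exact HasProd.prod_range_mul (multipliable_of_summable_log _ hne hsum).hasProd

lemma tendsto_qPoch {q : ℂ} (hq : ‖q‖ < 1) (a : ℂ) :
    Tendsto (fun N => qPoch a q N) atTop (𝓝 (qPochInf a q)) := by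
  obtain ⟨m, hne, hsum, hp⟩ := hasProd_aux hq a
  have h1 := hp.tprod_eq
  rw [qPochInf, h1]
  exact hp.tendsto_prod_nat

lemma qPochInf_ne_zero {q : ℂ} (hq : ‖q‖ < 1) (a : ℂ)
    (h : ∀ k : ℕ, (1 : ℂ) - a * q ^ k ≠ 0) : qPochInf a q ≠ 0 := by
  obtain ⟨m, hne, hsum, hp⟩ := hasProd_aux hq a
  have h1 : qPochInf a q = _ := hp.tprod_eq
  rw [h1]
  exact mul_ne_zero (Finset.prod_ne_zero_iff.mpr fun i _ => h i)
    (tprod_ne_zero_of_summable_log _ hne hsum)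


lemma hVA (b d e f x : ℂ) (hdef : d * e * f = 1) (hd0 : d ≠ 0) (he0 : e ≠ 0) (hf0 : f ≠ 0) :
    (1 - b*d*x) * (1 - b*e*x) * (1 - b*f*x)
      = (1 - b/d*x) * (1 - b/e*x) * (1 - b/f*x) + (1 + b*x) * x * (b*(1-d)*(1-e)*(1-f)) := by
  have e1 : b/d = b*(e*f) := by field_simp; linear_combination (-b)*hdef
  have e2 : b/e = b*(d*f) := by field_simp; linear_combination (-b)*hdef
  have e3 : b/f = b*(d*e) := by field_simp; linear_combination (-b)*hdef
  rw [e1, e2, e3]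
  linear_combination (b*x + b^2*x^2*(1-(d+e+f)) + b^3*x^3*(d*e*f)) * hdef

lemma step' (b x Dv p1 p2 p3 r1 r2 r3 s1 s2 s3 A1 A2 A3 V1 V2 V3 W1 W2 W3 : ℂ)
    (hD : Dv ≠ 0) (hs1 : s1 ≠ 0) (hs2 : s2 ≠ 0) (hs3 : s3 ≠ 0)
    (hW1 : W1 ≠ 0) (hW2 : W2 ≠ 0) (hW3 : W3 ≠ 0)
    (hVAh : A1 * A2 * A3 = V1 * V2 * V3 + (1 + b*x) * x * Dv) :
    V1 * V2 * V3 * (p1*p2*p3 - r1*r2*r3) / (Dv * (s1*s2*s3))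
      + (1 + b*x) * (p1*p2*p3 / (s1*s2*s3)) * x
    = W1 * W2 * W3 * (p1*A1 * (p2*A2) * (p3*A3) - r1*V1 * (r2*V2) * (r3*V3)) /
        (Dv * (s1*W1 * (s2*W2) * (s3*W3))) := by
  have hW : W1 * W2 * W3 ≠ 0 := mul_ne_zero (mul_ne_zero hW1 hW2) hW3
  rw [show Dv * (s1*W1 * (s2*W2) * (s3*W3)) = Dv * (s1*s2*s3) * (W1*W2*W3) by ring,
      show p1*A1 * (p2*A2) * (p3*A3) = p1*p2*p3 * (A1*A2*A3) by ring, hVAh,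
      show r1*V1 * (r2*V2) * (r3*V3) = r1*r2*r3 * (V1*V2*V3) by ring,
      mul_comm (W1*W2*W3) _, mul_div_mul_right _ _ hW]
  have hs : s1*s2*s3 ≠ 0 := mul_ne_zero (mul_ne_zero hs1 hs2) hs3
  have hDs : Dv * (s1*s2*s3) ≠ 0 := mul_ne_zero hD hs
  rw [eq_div_iff hDs, add_mul, div_mul_cancel₀ _ hDs,
    show (1 + b*x) * (p1*p2*p3 / (s1*s2*s3)) * x * (Dv * (s1*s2*s3))
      = p1*p2*p3 / (s1*s2*s3) * (s1*s2*s3) * ((1 + b*x) * x * Dv) by ring,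
    div_mul_cancel₀ _ hs]
  ring

theorem stmt18 (q b d e f : ℂ) (hq0 : 0 < ‖q‖) (hq1 : ‖q‖ < 1)
    (hb : b ≠ 0) (hdef : d * e * f = 1) (hd1 : d ≠ 1) (he1 : e ≠ 1) (hf1 : f ≠ 1)
    (hd : ∀ k : ℕ, b * q ^ (k + 1) / d ≠ 1) (he : ∀ k : ℕ, b * q ^ (k + 1) / e ≠ 1)
    (hf : ∀ k : ℕ, b * q ^ (k + 1) / f ≠ 1) :
    ∑' n : ℕ, (1 + b * q ^ n) *
        (qPoch (b * d) q n * qPoch (b * e) q n * qPoch (b * f) q n /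
          (qPoch (b * q / d) q n * qPoch (b * q / e) q n * qPoch (b * q / f) q n)) * q ^ n =
      (qPochInf (b * d) q * qPochInf (b * e) q * qPochInf (b * f) q -
          qPochInf (b / d) q * qPochInf (b / e) q * qPochInf (b / f) q) /
        (b * (1 - d) * (1 - e) * (1 - f) *
          (qPochInf (b * q / d) q * qPochInf (b * q / e) q * qPochInf (b * q / f) q)) := by
  have hq : ‖q‖ < 1 := hq1
  have hd0 : d ≠ 0 := by intro h; rw [h] at hdef; simp at hdef
  have he0 : e ≠ 0 := by intro h; rw [h] at hdef; simp at hdef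
  have hf0 : f ≠ 0 := by intro h; rw [h] at hdef; simp at hdef
  have hd1' : (1:ℂ) - d ≠ 0 := sub_ne_zero.mpr (Ne.symm hd1)
  have he1' : (1:ℂ) - e ≠ 0 := sub_ne_zero.mpr (Ne.symm he1)
  have hf1' : (1:ℂ) - f ≠ 0 := sub_ne_zero.mpr (Ne.symm hf1)
  have hD : b * (1-d) * (1-e) * (1-f) ≠ 0 :=
    mul_ne_zero (mul_ne_zero (mul_ne_zero hb hd1') he1') hf1'
  have hQd : ∀ k : ℕ, (1:ℂ) - b*q/d*q^k ≠ 0 := by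
    intro k hcon
    exact hd k (by rw [show b*q^(k+1)/d = b*q/d*q^k by ring]; exact (sub_eq_zero.mp hcon).symm)
  have hQe : ∀ k : ℕ, (1:ℂ) - b*q/e*q^k ≠ 0 := by
    intro k hcon
    exact he k (by rw [show b*q^(k+1)/e = b*q/e*q^k by ring]; exact (sub_eq_zero.mp hcon).symm)
  have hQf : ∀ k : ℕ, (1:ℂ) - b*q/f*q^k ≠ 0 := by
    intro k hcon
    exact hf k (by rw [show b*q^(k+1)/f = b*q/f*q^k by ring]; exact (sub_eq_zero.mp hcon).symm)
  have hVd : ∀ k : ℕ, (1:ℂ) - b/d*q^(k+1) ≠ 0 := by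
    intro k; have := hQd k; rwa [show (1:ℂ) - b*q/d*q^k = 1 - b/d*q^(k+1) by ring] at this
  have hVe : ∀ k : ℕ, (1:ℂ) - b/e*q^(k+1) ≠ 0 := by
    intro k; have := hQe k; rwa [show (1:ℂ) - b*q/e*q^k = 1 - b/e*q^(k+1) by ring] at this
  have hVf : ∀ k : ℕ, (1:ℂ) - b/f*q^(k+1) ≠ 0 := by
    intro k; have := hQf k; rwa [show (1:ℂ) - b*q/f*q^k = 1 - b/f*q^(k+1) by ring] at this
  have hsQd : ∀ N : ℕ, qPoch (b*q/d) q N ≠ 0 :=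
    fun N => Finset.prod_ne_zero_iff.mpr (fun k _ => hQd k)
  have hsQe : ∀ N : ℕ, qPoch (b*q/e) q N ≠ 0 :=
    fun N => Finset.prod_ne_zero_iff.mpr (fun k _ => hQe k)
  have hsQf : ∀ N : ℕ, qPoch (b*q/f) q N ≠ 0 :=
    fun N => Finset.prod_ne_zero_iff.mpr (fun k _ => hQf k)
  -- partial sums closed form
  have key : ∀ N : ℕ, ∑ n ∈ Finset.range N, (1 + b * q ^ n) *
        (qPoch (b * d) q n * qPoch (b * e) q n * qPoch (b * f) q n /
          (qPoch (b * q / d) q n * qPoch (b * q / e) q n * qPoch (b * q / f) q n)) * q ^ n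
      = (1 - b/d*q^N) * (1 - b/e*q^N) * (1 - b/f*q^N) *
          (qPoch (b*d) q N * qPoch (b*e) q N * qPoch (b*f) q N
            - qPoch (b/d) q N * qPoch (b/e) q N * qPoch (b/f) q N) /
          (b*(1-d)*(1-e)*(1-f) *
            (qPoch (b*q/d) q N * qPoch (b*q/e) q N * qPoch (b*q/f) q N)) := by
    intro N
    induction N with
    | zero => simp [qPoch]
    | succ N ih =>
      rw [Finset.sum_range_succ, ih, qPoch_succ (b*d), qPoch_succ (b*e), qPoch_succ (b*f),
        qPoch_succ (b/d), qPoch_succ (b/e), qPoch_succ (b/f),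
        qPoch_succ (b*q/d), qPoch_succ (b*q/e), qPoch_succ (b*q/f),
        show (1:ℂ) - b*q/d*q^N = 1 - b/d*q^(N+1) by ring,
        show (1:ℂ) - b*q/e*q^N = 1 - b/e*q^(N+1) by ring,
        show (1:ℂ) - b*q/f*q^N = 1 - b/f*q^(N+1) by ring]
      exact step' b (q^N) _ _ _ _ _ _ _ _ _ _ _ _ _ _ _ _ _ _ _
        hD (hsQd N) (hsQe N) (hsQf N) (hVd N) (hVe N) (hVf N)
        (hVA b d e f (q^N) hdef hd0 he0 hf0)
  -- limits
  have hx : Tendsto (fun N : ℕ => q ^ N) atTop (𝓝 0) :=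
    tendsto_pow_atTop_nhds_zero_of_norm_lt_one hq
  have hvd : Tendsto (fun N : ℕ => 1 - b/d*q^N) atTop (𝓝 1) := by
    have := (hx.const_mul (b/d)).const_sub 1; simpa using this
  have hve : Tendsto (fun N : ℕ => 1 - b/e*q^N) atTop (𝓝 1) := by
    have := (hx.const_mul (b/e)).const_sub 1; simpa using this
  have hvf : Tendsto (fun N : ℕ => 1 - b/f*q^N) atTop (𝓝 1) := by
    have := (hx.const_mul (b/f)).const_sub 1; simpa using this
  have hPd := tendsto_qPoch hq (b*d)
  have hPe := tendsto_qPoch hq (b*e)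
  have hPf := tendsto_qPoch hq (b*f)
  have hRd := tendsto_qPoch hq (b/d)
  have hRe := tendsto_qPoch hq (b/e)
  have hRf := tendsto_qPoch hq (b/f)
  have hSd := tendsto_qPoch hq (b*q/d)
  have hSe := tendsto_qPoch hq (b*q/e)
  have hSf := tendsto_qPoch hq (b*q/f)
  have hSdne : qPochInf (b*q/d) q ≠ 0 := qPochInf_ne_zero hq _ hQd
  have hSene : qPochInf (b*q/e) q ≠ 0 := qPochInf_ne_zero hq _ hQe
  have hSfne : qPochInf (b*q/f) q ≠ 0 := qPochInf_ne_zero hq _ hQf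
  have hQprodne : qPochInf (b*q/d) q * qPochInf (b*q/e) q * qPochInf (b*q/f) q ≠ 0 :=
    mul_ne_zero (mul_ne_zero hSdne hSene) hSfne
  have hdenne : b*(1-d)*(1-e)*(1-f) *
      (qPochInf (b*q/d) q * qPochInf (b*q/e) q * qPochInf (b*q/f) q) ≠ 0 :=
    mul_ne_zero hD hQprodne
  have hclosed : Tendsto (fun N : ℕ => (1 - b/d*q^N) * (1 - b/e*q^N) * (1 - b/f*q^N) *
          (qPoch (b*d) q N * qPoch (b*e) q N * qPoch (b*f) q N
            - qPoch (b/d) q N * qPoch (b/e) q N * qPoch (b/f) q N) /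
          (b*(1-d)*(1-e)*(1-f) *
            (qPoch (b*q/d) q N * qPoch (b*q/e) q N * qPoch (b*q/f) q N))) atTop
      (𝓝 ((qPochInf (b * d) q * qPochInf (b * e) q * qPochInf (b * f) q -
          qPochInf (b / d) q * qPochInf (b / e) q * qPochInf (b / f) q) /
        (b * (1 - d) * (1 - e) * (1 - f) *
          (qPochInf (b * q / d) q * qPochInf (b * q / e) q * qPochInf (b * q / f) q)))) := by
    have hnum := ((hvd.mul hve).mul hvf).mul
      (((hPd.mul hPe).mul hPf).sub ((hRd.mul hRe).mul hRf))
    have hden := (tendsto_const_nhds (x := b*(1-d)*(1-e)*(1-f))).mul ((hSd.mul hSe).mul hSf)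
    have := hnum.div hden hdenne
    simp only [one_mul] at this
    exact this
  -- summability
  have hratio : Tendsto (fun n : ℕ => qPoch (b*d) q n * qPoch (b*e) q n * qPoch (b*f) q n /
      (qPoch (b*q/d) q n * qPoch (b*q/e) q n * qPoch (b*q/f) q n)) atTop
      (𝓝 (qPochInf (b*d) q * qPochInf (b*e) q * qPochInf (b*f) q /
        (qPochInf (b*q/d) q * qPochInf (b*q/e) q * qPochInf (b*q/f) q))) :=
    ((hPd.mul hPe).mul hPf).div ((hSd.mul hSe).mul hSf) hQprodne
  set M : ℝ := ‖qPochInf (b*d) q * qPochInf (b*e) q * qPochInf (b*f) q /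
      (qPochInf (b*q/d) q * qPochInf (b*q/e) q * qPochInf (b*q/f) q)‖ + 1 with hM
  have hMpos : 0 < M := by positivity
  have hev : ∀ᶠ n : ℕ in atTop, ‖qPoch (b*d) q n * qPoch (b*e) q n * qPoch (b*f) q n /
      (qPoch (b*q/d) q n * qPoch (b*q/e) q n * qPoch (b*q/f) q n)‖ < M :=
    hratio.norm.eventually_lt_const (lt_add_one _)
  have hsummable : Summable (fun n : ℕ => (1 + b * q ^ n) *
        (qPoch (b * d) q n * qPoch (b * e) q n * qPoch (b * f) q n /
          (qPoch (b * q / d) q n * qPoch (b * q / e) q n * qPoch (b * q / f) q n)) * q ^ n) := by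
    apply Summable.of_norm_bounded_eventually_nat (g := fun n : ℕ => (1+‖b‖)*M*‖q‖^n)
    · exact (summable_geometric_of_lt_one (norm_nonneg q) hq).mul_left _
    · filter_upwards [hev] with n hn
      rw [norm_mul, norm_mul, norm_pow]
      have h1 : ‖1 + b*q^n‖ ≤ 1 + ‖b‖ := by
        calc ‖1 + b*q^n‖ ≤ ‖(1:ℂ)‖ + ‖b*q^n‖ := norm_add_le _ _
          _ = 1 + ‖b‖*‖q‖^n := by rw [norm_one, norm_mul, norm_pow]
          _ ≤ 1 + ‖b‖ := by
              have : ‖q‖^n ≤ 1 := pow_le_one₀ (norm_nonneg q) hq.le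
              nlinarith [norm_nonneg b]
      exact mul_le_mul_of_nonneg_right
        (mul_le_mul h1 hn.le (norm_nonneg _) (by positivity)) (by positivity)
  have h1 : Tendsto (fun N : ℕ => ∑ n ∈ Finset.range N, (1 + b * q ^ n) *
        (qPoch (b * d) q n * qPoch (b * e) q n * qPoch (b * f) q n /
          (qPoch (b * q / d) q n * qPoch (b * q / e) q n * qPoch (b * q / f) q n)) * q ^ n)
      atTop (𝓝 (∑' n : ℕ, (1 + b * q ^ n) *
        (qPoch (b * d) q n * qPoch (b * e) q n * qPoch (b * f) q n /
          (qPoch (b * q / d) q n * qPoch (b * q / e) q n * qPoch (b * q / f) q n)) * q ^ n)) :=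
    hsummable.hasSum.tendsto_sum_nat
  rw [funext key] at h1
  exact tendsto_nhds_unique h1 hclosed
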